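/- Let H = (V, E) be a hypergraph and let k be a positive integer. Then E can be partitioned into k pairwise disjoint hyperforests if and only if |E[X]| ≤ k(|X| − 1) for every nonempty X ⊆ V. -/

import Mathlib

open Finset

variable {V α : Type*}

/-- `F[X]`: the subfamily of hyperedges of `F` contained in `X`. -/
def restrict [DecidableEq V] (edge : α → Finset V) (F : Finset α) (X : Finset V) : Finset α :=
  F.filter fun e => edge e ⊆ X

/-- `F` is a hyperforest of the hypergraph `(V, E)` (with hyperedges given by `edge`). -/
def IsHyperforest [DecidableEq V] (edge : α → Finset V) (E F : Finset α) : Prop :=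
  F ⊆ E ∧ ∀ X : Finset V, X.Nonempty → (restrict edge F X).card ≤ X.card - 1

/-- `F` is a hypertree: a hyperforest with `|V| - 1` hyperedges. -/
def IsHypertree [Fintype V] [DecidableEq V] (edge : α → Finset V) (E F : Finset α) : Prop :=
  IsHyperforest edge E F ∧ F.card = Fintype.card V - 1

/-- `Ps` is a family of pairwise disjoint nonempty sets whose union is `S`. -/
def IsPartitionOf [DecidableEq V] (Ps : Finset (Finset V)) (S : Finset V) : Prop :=
  (∀ P ∈ Ps, P.Nonempty) ∧ (∀ P ∈ Ps, ∀ Q ∈ Ps, P ≠ Q → Disjoint P Q) ∧ Ps.sup id = S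

/-- `Ps` is a partition of the vertex set `V` into nonempty parts. -/
def IsPartition [Fintype V] [DecidableEq V] (Ps : Finset (Finset V)) : Prop :=
  IsPartitionOf Ps Finset.univ

/-- `δ_F(Ps)`: hyperedges of `F` contained in the union of the members of `Ps`
and intersecting at least two members of `Ps`. -/
def delta [DecidableEq V] (edge : α → Finset V) (F : Finset α) (Ps : Finset (Finset V)) :
    Finset α :=
  F.filter fun e => edge e ⊆ Ps.sup id ∧
    2 ≤ (Ps.filter fun P => (edge e ∩ P).Nonempty).card

section ArbAux
open scoped Classical
set_option linter.unusedSectionVars false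

namespace Arb

variable [Fintype V] [DecidableEq V] [DecidableEq α]
variable {edge : α → Finset V}

/-- internal forest predicate (no `⊆ E` requirement, `+1` form). -/
def HFor (edge : α → Finset V) (F : Finset α) : Prop :=
  ∀ X : Finset V, X.Nonempty → (_root_.restrict edge F X).card + 1 ≤ X.card

/-- tight set for a family. -/
def HTight (edge : α → Finset V) (F : Finset α) (X : Finset V) : Prop :=
  X.Nonempty ∧ (_root_.restrict edge F X).card + 1 = X.card

lemma mem_restrict {F : Finset α} {X : Finset V} {e : α} :
    e ∈ _root_.restrict edge F X ↔ e ∈ F ∧ edge e ⊆ X := Finset.mem_filter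

lemma restrict_subset (F : Finset α) (X : Finset V) : _root_.restrict edge F X ⊆ F :=
  Finset.filter_subset _ _

lemma restrict_mono_left {F G : Finset α} (h : F ⊆ G) (X : Finset V) :
    _root_.restrict edge F X ⊆ _root_.restrict edge G X := by
  intro e he; rw [mem_restrict] at he ⊢; exact ⟨h he.1, he.2⟩

lemma restrict_mono_right (F : Finset α) {X Y : Finset V} (h : X ⊆ Y) :
    _root_.restrict edge F X ⊆ _root_.restrict edge F Y := by
  intro e he; rw [mem_restrict] at he ⊢; exact ⟨he.1, he.2.trans h⟩

lemma restrict_insert (y : α) (F : Finset α) (X : Finset V) :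
    _root_.restrict edge (insert y F) X =
      if edge y ⊆ X then insert y (_root_.restrict edge F X) else _root_.restrict edge F X :=
  Finset.filter_insert _ _ _

lemma restrict_restrict (F : Finset α) (X : Finset V) :
    _root_.restrict edge (_root_.restrict edge F X) X = _root_.restrict edge F X := by
  ext e; simp only [mem_restrict]; tauto

lemma restrict_inter (F : Finset α) (X Y : Finset V) :
    _root_.restrict edge F X ∩ _root_.restrict edge F Y = _root_.restrict edge F (X ∩ Y) := by
  ext e; simp only [Finset.mem_inter, mem_restrict, Finset.subset_inter_iff]; tauto

lemma restrict_union_subset (F : Finset α) (X Y : Finset V) :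
    _root_.restrict edge F X ∪ _root_.restrict edge F Y ⊆ _root_.restrict edge F (X ∪ Y) := by
  intro e he
  rcases Finset.mem_union.1 he with h | h <;> rw [mem_restrict] at h ⊢
  · exact ⟨h.1, h.2.trans Finset.subset_union_left⟩
  · exact ⟨h.1, h.2.trans Finset.subset_union_right⟩

lemma card_restrict_submod (F : Finset α) (X Y : Finset V) :
    (_root_.restrict edge F X).card + (_root_.restrict edge F Y).card ≤
      (_root_.restrict edge F (X ∪ Y)).card + (_root_.restrict edge F (X ∩ Y)).card := by
  have h1 := Finset.card_union_add_card_inter (_root_.restrict edge F X)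
    (_root_.restrict edge F Y)
  have h2 : (_root_.restrict edge F X ∪ _root_.restrict edge F Y).card ≤
      (_root_.restrict edge F (X ∪ Y)).card :=
    Finset.card_le_card (restrict_union_subset F X Y)
  rw [restrict_inter] at h1
  omega

lemma HFor.mono {F G : Finset α} (h : HFor edge G) (hFG : F ⊆ G) : HFor edge F := by
  intro X hX
  exact le_trans (Nat.add_le_add_right (Finset.card_le_card (restrict_mono_left hFG X)) 1) (h X hX)

lemma hfor_empty : HFor edge (∅ : Finset α) := by
  intro X hX
  have : _root_.restrict edge (∅ : Finset α) X = ∅ := Finset.filter_empty _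
  rw [this]
  simpa using Finset.card_pos.2 hX

lemma dep_mono {F G : Finset α} (h : ¬HFor edge F) (hFG : F ⊆ G) : ¬HFor edge G :=
  fun hG => h (hG.mono hFG)

/-- tight sets are closed under union and intersection when the intersection is nonempty. -/
lemma tight_union_inter {F : Finset α} (hF : HFor edge F) {X Y : Finset V}
    (hX : HTight edge F X) (hY : HTight edge F Y) (hXY : (X ∩ Y).Nonempty) :
    HTight edge F (X ∪ Y) ∧ HTight edge F (X ∩ Y) := by
  obtain ⟨hXne, hXc⟩ := hX
  obtain ⟨hYne, hYc⟩ := hY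
  have hsub := card_restrict_submod (edge := edge) F X Y
  have hU := hF (X ∪ Y) (hXne.mono Finset.subset_union_left)
  have hI := hF (X ∩ Y) hXY
  have hcard := Finset.card_union_add_card_inter X Y
  constructor
  · exact ⟨hXne.mono Finset.subset_union_left, by omega⟩
  · exact ⟨hXY, by omega⟩

/-- a tight set violated by an inserted element. -/
lemma dep_insert_of_tight {F : Finset α} {X : Finset V} {y : α}
    (ht : HTight edge F X) (hy : y ∉ F) (hyX : edge y ⊆ X) :
    ¬HFor edge (insert y F) := by
  intro h
  have := h X ht.1
  rw [restrict_insert, if_pos hyX] at this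
  have hyn : y ∉ _root_.restrict edge F X := fun hc => hy (restrict_subset F X hc)
  rw [Finset.card_insert_of_notMem hyn] at this
  have h2 := ht.2
  omega

lemma exists_tight_of_dep {F : Finset α} {y : α} (hF : HFor edge F) (hy : y ∉ F)
    (hdep : ¬HFor edge (insert y F)) :
    ∃ Z : Finset V, HTight edge F Z ∧ edge y ⊆ Z := by
  unfold HFor at hdep
  push_neg at hdep
  obtain ⟨Z, hZne, hZ⟩ := hdep
  rw [restrict_insert] at hZ
  by_cases hyZ : edge y ⊆ Z
  · rw [if_pos hyZ] at hZ
    have hyn : y ∉ _root_.restrict edge F Z := fun hc => hy (restrict_subset F Z hc)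
    rw [Finset.card_insert_of_notMem hyn] at hZ
    have := hF Z hZne
    exact ⟨Z, ⟨hZne, by omega⟩, hyZ⟩
  · rw [if_neg hyZ] at hZ
    exact absurd (hF Z hZne) (by omega)


/-- intersection-closed properties pass to `inf` of a nonempty family. -/
lemma inf_prop {P : Finset V → Prop} {s : Finset (Finset V)} (hne : s.Nonempty)
    (hall : ∀ X ∈ s, P X) (hinter : ∀ X Y, P X → P Y → P (X ∩ Y)) :
    P (s.inf id) := by
  induction s using Finset.induction_on with
  | empty => exact absurd hne (by simp)
  | @insert a s ha ih =>
    rw [Finset.inf_insert]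
    rcases s.eq_empty_or_nonempty with h | h
    · subst h; simpa using hall a (by simp)
    · have hPs := ih h (fun X hX => hall X (Finset.mem_insert_of_mem hX))
      exact hinter _ _ (hall a (Finset.mem_insert_self a s)) hPs

/-- the minimal tight set containing `edge y`. -/
noncomputable def minTight (edge : α → Finset V) (F : Finset α) (y : α) : Finset V :=
  ((Finset.univ : Finset V).powerset.filter
    (fun X => edge y ⊆ X ∧ HTight edge F X)).inf id

section MinTight

variable {F : Finset α} {y : α}

lemma minTight_spec (hF : HFor edge F) (hy : y ∉ F) (hyne : (edge y).Nonempty)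
    (hdep : ¬HFor edge (insert y F)) :
    (edge y ⊆ minTight edge F y ∧ HTight edge F (minTight edge F y)) ∧
      ∀ Z : Finset V, edge y ⊆ Z → HTight edge F Z → minTight edge F y ⊆ Z := by
  have hne : ((Finset.univ : Finset V).powerset.filter
      (fun X => edge y ⊆ X ∧ HTight edge F X)).Nonempty := by
    obtain ⟨Z, hZ, hyZ⟩ := exists_tight_of_dep hF hy hdep
    exact ⟨Z, Finset.mem_filter.2 ⟨Finset.mem_powerset.2 (Finset.subset_univ Z), hyZ, hZ⟩⟩
  unfold minTight
  constructor
  · refine inf_prop hne (fun X hX => (Finset.mem_filter.1 hX).2) ?_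
    rintro X Y ⟨hyX, hXt⟩ ⟨hyY, hYt⟩
    have hXY : (X ∩ Y).Nonempty := hyne.mono (Finset.subset_inter hyX hyY)
    exact ⟨Finset.subset_inter hyX hyY, (tight_union_inter hF hXt hYt hXY).2⟩
  · intro Z hyZ hZt
    have hm : Z ∈ (Finset.univ : Finset V).powerset.filter
        (fun X => edge y ⊆ X ∧ HTight edge F X) :=
      Finset.mem_filter.2 ⟨Finset.mem_powerset.2 (Finset.subset_univ Z), hyZ, hZt⟩
    exact Finset.inf_le (f := id) hm

/-- every dependent subfamily of `insert y F` contains the fundamental circuit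
`insert y (F[minTight y])`. -/
lemma circuit_subset_dep (hF : HFor edge F) (hy : y ∉ F) (hyne : (edge y).Nonempty)
    (hdep : ¬HFor edge (insert y F)) {D : Finset α} (hD : D ⊆ insert y F)
    (hDdep : ¬HFor edge D) :
    insert y (_root_.restrict edge F (minTight edge F y)) ⊆ D := by
  obtain ⟨⟨hymin, hmint⟩, hminle⟩ := minTight_spec hF hy hyne hdep
  unfold HFor at hDdep
  push_neg at hDdep
  obtain ⟨Z, hZne, hZ⟩ := hDdep
  -- D's restriction to Z is large
  have hDF : D \ {y} ⊆ F := by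
    intro e he
    rw [Finset.mem_sdiff, Finset.mem_singleton] at he
    rcases Finset.mem_insert.1 (hD he.1) with h | h
    · exact absurd h he.2
    · exact h
  have hsub : _root_.restrict edge D Z \ {y} ⊆ _root_.restrict edge F Z := by
    intro e he
    rw [Finset.mem_sdiff, Finset.mem_singleton] at he
    rw [mem_restrict] at he ⊢
    exact ⟨hDF (by rw [Finset.mem_sdiff, Finset.mem_singleton]; exact ⟨he.1.1, he.2⟩), he.1.2⟩
  have hFZ := hF Z hZne
  have hyD : y ∈ _root_.restrict edge D Z := by
    by_contra hyD
    have : _root_.restrict edge D Z ⊆ _root_.restrict edge F Z := by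
      intro e he
      refine hsub ?_
      rw [Finset.mem_sdiff, Finset.mem_singleton]
      exact ⟨he, fun h => hyD (h ▸ he)⟩
    have := Finset.card_le_card this
    omega
  have hyZ : edge y ⊆ Z := (mem_restrict.1 hyD).2
  have hcard : (_root_.restrict edge D Z).card - 1 ≤ (_root_.restrict edge F Z).card := by
    have := Finset.card_le_card hsub
    have hc : (_root_.restrict edge D Z \ {y}).card = (_root_.restrict edge D Z).card - 1 := by
      rw [Finset.sdiff_singleton_eq_erase, Finset.card_erase_of_mem hyD]
    omega
  -- Z is tight for F and F[Z] ⊆ D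
  have hZt : HTight edge F Z := ⟨hZne, by omega⟩
  have hFZD : _root_.restrict edge F Z ⊆ D := by
    have hcard2 : (_root_.restrict edge D Z \ {y}).card ≤ (_root_.restrict edge F Z).card :=
      Finset.card_le_card hsub
    have hcard3 : (_root_.restrict edge F Z).card ≤ (_root_.restrict edge D Z \ {y}).card := by
      rw [Finset.sdiff_singleton_eq_erase, Finset.card_erase_of_mem hyD]
      have h2 := hZt.2
      omega
    have heq := Finset.eq_of_subset_of_card_le hsub hcard3
    intro e he
    rw [← heq] at he
    exact restrict_subset D Z (Finset.mem_sdiff.1 he).1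
  -- conclude
  intro e he
  rcases Finset.mem_insert.1 he with h | h
  · exact h ▸ restrict_subset D Z hyD
  · exact hFZD (restrict_mono_right F (hminle Z hyZ hZt) h)
end MinTight

section Rank

variable {F J S A : Finset α}

lemma exists_max_tight (hX : HTight edge F X) :
    ∃ X', HTight edge F X' ∧ X ⊆ X' ∧ ∀ Z, HTight edge F Z → X' ⊆ Z → Z = X' := by
  classical
  set s := (Finset.univ : Finset V).powerset.filter
    (fun Z => HTight edge F Z ∧ X ⊆ Z) with hs
  have hne : s.Nonempty :=
    ⟨X, Finset.mem_filter.2 ⟨Finset.mem_powerset.2 (Finset.subset_univ X), hX, subset_rfl⟩⟩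
  obtain ⟨M, hM, hmax⟩ : ∃ M ∈ s, ∀ x' ∈ s, ¬ M < x' := by
    obtain ⟨M, hM⟩ := Finset.exists_maximal hne
    exact ⟨M, hM.1, fun x' hx' hlt => lt_irrefl _ (lt_of_lt_of_le hlt (hM.2 hx' hlt.le))⟩
  rw [hs, Finset.mem_filter] at hM
  refine ⟨M, hM.2.1, hM.2.2, ?_⟩
  intro Z hZt hMZ
  have hZs : Z ∈ s := Finset.mem_filter.2
    ⟨Finset.mem_powerset.2 (Finset.subset_univ Z), hZt, hM.2.2.trans hMZ⟩
  have := hmax Z hZs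
  by_contra hne'
  exact this (lt_of_le_of_ne hMZ (fun h => hne' h.symm))

/-- Partition lemma: dependent elements are covered by pairwise disjoint tight sets. -/
lemma part_lemma (hF : HFor edge F)
    (hA : ∀ a ∈ A, ∃ X, HTight edge F X ∧ edge a ⊆ X) :
    ∃ T : Finset (Finset V), (∀ X ∈ T, HTight edge F X) ∧
      (∀ X ∈ T, ∀ Y ∈ T, X ≠ Y → Disjoint X Y) ∧
      (∀ a ∈ A, ∃ X ∈ T, edge a ⊆ X) := by
  classical
  have key : ∀ a : {x // x ∈ A}, ∃ X', (HTight edge F X' ∧ edge a.1 ⊆ X') ∧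
      ∀ Z, HTight edge F Z → X' ⊆ Z → Z = X' := by
    rintro ⟨a, ha⟩
    obtain ⟨X, hXt, haX⟩ := hA a ha
    obtain ⟨X', hX't, hXX', hmax⟩ := exists_max_tight (edge := edge) hXt
    exact ⟨X', ⟨hX't, haX.trans hXX'⟩, hmax⟩
  set f : {x // x ∈ A} → Finset V := fun a => Classical.choose (key a) with hf
  have hfspec : ∀ a : {x // x ∈ A}, (HTight edge F (f a) ∧ edge a.1 ⊆ f a) ∧
      ∀ Z, HTight edge F Z → f a ⊆ Z → Z = f a := fun a => Classical.choose_spec (key a)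
  refine ⟨A.attach.image f, ?_, ?_, ?_⟩
  · intro X hX
    obtain ⟨a, _, rfl⟩ := Finset.mem_image.1 hX
    exact (hfspec a).1.1
  · intro X hX Y hY hXY
    obtain ⟨a, _, rfl⟩ := Finset.mem_image.1 hX
    obtain ⟨b, _, rfl⟩ := Finset.mem_image.1 hY
    by_contra hdisj
    rw [Finset.not_disjoint_iff_nonempty_inter] at hdisj
    have hUt : HTight edge F (f a ∪ f b) :=
      (tight_union_inter hF (hfspec a).1.1 (hfspec b).1.1 hdisj).1
    have h1 : f a ∪ f b = f a := (hfspec a).2 _ hUt Finset.subset_union_left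
    have h2 : f a ∪ f b = f b := (hfspec b).2 _ hUt Finset.subset_union_right
    exact hXY (h1 ▸ h2)
  · intro a ha
    exact ⟨f ⟨a, ha⟩, Finset.mem_image_of_mem f (Finset.mem_attach A ⟨a, ha⟩),
      (hfspec ⟨a, ha⟩).1.2⟩

lemma disjoint_restrict {G : Finset α} (hGne : ∀ a ∈ G, (edge a).Nonempty)
    {X Y : Finset V} (hXY : Disjoint X Y) :
    Disjoint (_root_.restrict edge G X) (_root_.restrict edge G Y) := by
  rw [Finset.disjoint_left]
  intro a haX haY
  rw [mem_restrict] at haX haY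
  obtain ⟨v, hv⟩ := hGne a haX.1
  exact (Finset.disjoint_left.1 hXY) (haX.2 hv) (haY.2 hv)

/-- Matroid augmentation for hyperforests. -/
lemma exchange (hF : HFor edge F) (hJ : HFor edge J)
    (hFne : ∀ a ∈ F, (edge a).Nonempty) (hJne : ∀ a ∈ J, (edge a).Nonempty)
    (hcard : F.card < J.card) :
    ∃ a ∈ J, a ∉ F ∧ HFor edge (insert a F) := by
  classical
  by_contra hcon
  push_neg at hcon
  have hA : ∀ a ∈ J \ F, ∃ X, HTight edge F X ∧ edge a ⊆ X := by
    intro a ha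
    have h := Finset.mem_sdiff.1 ha
    exact exists_tight_of_dep hF h.2 (hcon a h.1 h.2)
  obtain ⟨T, hTt, hTd, hTc⟩ := part_lemma (edge := edge) hF hA
  set U := T.biUnion (fun X => _root_.restrict edge J X) with hU
  set W := T.biUnion (fun X => _root_.restrict edge F X) with hW
  have hUcard : U.card = ∑ X ∈ T, (_root_.restrict edge J X).card :=
    Finset.card_biUnion (fun X hX Y hY hXY => disjoint_restrict hJne (hTd X hX Y hY hXY))
  have hWcard : W.card = ∑ X ∈ T, (_root_.restrict edge F X).card :=
    Finset.card_biUnion (fun X hX Y hY hXY => disjoint_restrict hFne (hTd X hX Y hY hXY))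
  have hle : ∀ X ∈ T, (_root_.restrict edge J X).card ≤ (_root_.restrict edge F X).card := by
    intro X hX
    have h1 := hJ X (hTt X hX).1
    have h2 := (hTt X hX).2
    omega
  have hUW : U.card ≤ W.card := by
    rw [hUcard, hWcard]; exact Finset.sum_le_sum hle
  have hUJ : U ⊆ J := by
    intro a ha
    obtain ⟨X, _, haX⟩ := Finset.mem_biUnion.1 ha
    exact restrict_subset J X haX
  have hWF : W ⊆ F := by
    intro a ha
    obtain ⟨X, _, haX⟩ := Finset.mem_biUnion.1 ha
    exact restrict_subset F X haX
  have hJU : J \ U ⊆ F \ W := by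
    intro a ha
    rw [Finset.mem_sdiff] at ha ⊢
    have haF : a ∈ F := by
      by_contra haF
      obtain ⟨X, hXT, haX⟩ := hTc a (Finset.mem_sdiff.2 ⟨ha.1, haF⟩)
      exact ha.2 (Finset.mem_biUnion.2 ⟨X, hXT, mem_restrict.2 ⟨ha.1, haX⟩⟩)
    refine ⟨haF, fun haW => ?_⟩
    obtain ⟨X, hXT, haX⟩ := Finset.mem_biUnion.1 haW
    exact ha.2 (Finset.mem_biUnion.2 ⟨X, hXT, mem_restrict.2 ⟨ha.1, (mem_restrict.1 haX).2⟩⟩)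
  have h1 := Finset.card_sdiff_add_card_eq_card hUJ
  have h2 := Finset.card_sdiff_add_card_eq_card hWF
  have h3 : (J \ U).card ≤ (F \ W).card := Finset.card_le_card hJU
  omega

/-- the rank of a family: maximal size of a hyperforest inside it. -/
noncomputable def rk (edge : α → Finset V) (S : Finset α) : ℕ :=
  (S.powerset.filter (HFor edge)).sup Finset.card

lemma le_rk {B : Finset α} (hB : HFor edge B) (hBS : B ⊆ S) : B.card ≤ rk edge S :=
  Finset.le_sup (Finset.mem_filter.2 ⟨Finset.mem_powerset.2 hBS, hB⟩)

lemma rk_mono {S S' : Finset α} (h : S ⊆ S') : rk edge S ≤ rk edge S' := by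
  apply Finset.sup_mono
  intro B hB
  rw [Finset.mem_filter, Finset.mem_powerset] at hB ⊢
  exact ⟨hB.1.trans h, hB.2⟩

lemma exists_rk_forest (S : Finset α) : ∃ B ⊆ S, HFor edge B ∧ B.card = rk edge S := by
  classical
  have hne : (S.powerset.filter (HFor edge)).Nonempty :=
    ⟨∅, Finset.mem_filter.2 ⟨Finset.mem_powerset.2 (Finset.empty_subset S), hfor_empty⟩⟩
  obtain ⟨B, hB, hBcard⟩ := Finset.exists_mem_eq_sup _ hne Finset.card
  rw [Finset.mem_filter, Finset.mem_powerset] at hB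
  exact ⟨B, hB.1, hB.2, hBcard.symm⟩

lemma exists_maximal_forest (hAS : A ⊆ S) (hA : HFor edge A) :
    ∃ B, A ⊆ B ∧ B ⊆ S ∧ HFor edge B ∧ ∀ c ∈ S, c ∉ B → ¬HFor edge (insert c B) := by
  classical
  set s := S.powerset.filter (fun B => HFor edge B ∧ A ⊆ B) with hs
  have hne : s.Nonempty :=
    ⟨A, Finset.mem_filter.2 ⟨Finset.mem_powerset.2 hAS, hA, subset_rfl⟩⟩
  obtain ⟨B, hB, hmax⟩ : ∃ B ∈ s, ∀ x' ∈ s, ¬ B < x' := by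
    obtain ⟨B, hB⟩ := Finset.exists_maximal hne
    exact ⟨B, hB.1, fun x' hx' hlt => lt_irrefl _ (lt_of_lt_of_le hlt (hB.2 hx' hlt.le))⟩
  rw [hs, Finset.mem_filter, Finset.mem_powerset] at hB
  refine ⟨B, hB.2.2, hB.1, hB.2.1, ?_⟩
  intro c hcS hcB hcf
  have : insert c B ∈ s := Finset.mem_filter.2
    ⟨Finset.mem_powerset.2 (Finset.insert_subset hcS hB.1), hcf,
      hB.2.2.trans (Finset.subset_insert c B)⟩
  exact hmax _ this (Finset.ssubset_insert hcB)

lemma rk_eq_of_maximal (hSne : ∀ a ∈ S, (edge a).Nonempty) {B : Finset α}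
    (hBS : B ⊆ S) (hB : HFor edge B)
    (hmax : ∀ c ∈ S, c ∉ B → ¬HFor edge (insert c B)) : rk edge S = B.card := by
  refine le_antisymm ?_ (le_rk hB hBS)
  obtain ⟨B', hB'S, hB', hB'card⟩ := exists_rk_forest (edge := edge) S
  rw [← hB'card]
  by_contra hlt
  push_neg at hlt
  obtain ⟨a, haB', haB, haf⟩ := exchange hB hB' (fun a ha => hSne a (hBS ha))
    (fun a ha => hSne a (hB'S ha)) hlt
  exact hmax a (hB'S haB') haB haf

lemma rk_eq_of_spanning (hSne : ∀ a ∈ S, (edge a).Nonempty)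
    (hAS : A ⊆ S) (hA : HFor edge A)
    (hspan : ∀ c ∈ S, c ∉ A → ¬HFor edge (insert c A)) : rk edge S = A.card :=
  rk_eq_of_maximal hSne hAS hA hspan

lemma rk_insert_dep {a : α} (hSne : ∀ b ∈ insert a S, (edge b).Nonempty)
    (hAS : A ⊆ S) (hA : HFor edge A) (hdep : ¬HFor edge (insert a A)) :
    rk edge (insert a S) = rk edge S := by
  have haA : a ∉ A := fun h => hdep (by rwa [Finset.insert_eq_self.2 h])
  obtain ⟨B, hAB, hBS, hB, hmax⟩ :=
    exists_maximal_forest (S := insert a S) (hAS.trans (Finset.subset_insert a S)) hA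
  have haB : a ∉ B := by
    intro haB
    exact hdep (hB.mono (Finset.insert_subset haB hAB))
  have hBS' : B ⊆ S := by
    intro b hb
    rcases Finset.mem_insert.1 (hBS hb) with h | h
    · exact absurd (h ▸ hb) haB
    · exact h
  have h1 : rk edge (insert a S) = B.card := rk_eq_of_maximal hSne hBS hB hmax
  have h2 : B.card ≤ rk edge S := le_rk hB hBS'
  have h3 : rk edge S ≤ rk edge (insert a S) := rk_mono (Finset.subset_insert a S)
  omega

end Rank

section Count

lemma count_lemma {E A Istar : Finset α} {k : ℕ} (hk : 0 < k)
    (hIA : Istar ⊆ A) (hAE : A ⊆ E) (hI : HFor edge Istar)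
    (hEne : ∀ e ∈ E, (edge e).Nonempty)
    (hcond : ∀ X : Finset V, X.Nonempty → (_root_.restrict edge E X).card ≤ k * (X.card - 1))
    (hdep : ∀ a ∈ A, a ∉ Istar → ∃ X, HTight edge Istar X ∧ edge a ⊆ X) :
    A.card ≤ k * Istar.card := by
  classical
  have hIE : Istar ⊆ E := hIA.trans hAE
  obtain ⟨T, hTt, hTd, hTc⟩ := part_lemma (edge := edge) hI (A := A \ Istar)
    (fun a ha => hdep a (Finset.mem_sdiff.1 ha).1 (Finset.mem_sdiff.1 ha).2)
  set U := T.biUnion (fun X => _root_.restrict edge E X) with hU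
  set W := T.biUnion (fun X => _root_.restrict edge Istar X) with hW
  have hUcard : U.card = ∑ X ∈ T, (_root_.restrict edge E X).card :=
    Finset.card_biUnion (fun X hX Y hY hXY => disjoint_restrict hEne (hTd X hX Y hY hXY))
  have hWcard : W.card = ∑ X ∈ T, (_root_.restrict edge Istar X).card :=
    Finset.card_biUnion (fun X hX Y hY hXY =>
      disjoint_restrict (fun a ha => hEne a (hIE ha)) (hTd X hX Y hY hXY))
  have hterm : ∀ X ∈ T, (_root_.restrict edge E X).card ≤
      k * (_root_.restrict edge Istar X).card := by
    intro X hX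
    have h1 := hcond X (hTt X hX).1
    have h2 := (hTt X hX).2
    have h3 : X.card - 1 = (_root_.restrict edge Istar X).card := by omega
    rwa [h3] at h1
  have hUW : U.card ≤ k * W.card := by
    rw [hUcard, hWcard, Finset.mul_sum]
    exact Finset.sum_le_sum hterm
  have hWI : W ⊆ Istar := by
    intro a ha
    obtain ⟨X, _, haX⟩ := Finset.mem_biUnion.1 ha
    exact restrict_subset Istar X haX
  have hAU : A \ U ⊆ Istar \ W := by
    intro a ha
    rw [Finset.mem_sdiff] at ha ⊢
    have haI : a ∈ Istar := by
      by_contra haI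
      obtain ⟨X, hXT, haX⟩ := hTc a (Finset.mem_sdiff.2 ⟨ha.1, haI⟩)
      exact ha.2 (Finset.mem_biUnion.2 ⟨X, hXT, mem_restrict.2 ⟨hAE ha.1, haX⟩⟩)
    refine ⟨haI, fun haW => ?_⟩
    obtain ⟨X, hXT, haX⟩ := Finset.mem_biUnion.1 haW
    exact ha.2 (Finset.mem_biUnion.2 ⟨X, hXT,
      mem_restrict.2 ⟨hAE ha.1, (mem_restrict.1 haX).2⟩⟩)
  have h1 : A.card ≤ (A \ U).card + U.card := Finset.card_le_card_sdiff_add_card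
  have h2 : (A \ U).card ≤ (Istar \ W).card := Finset.card_le_card hAU
  have h3 : (Istar \ W).card + W.card = Istar.card := Finset.card_sdiff_add_card_eq_card hWI
  have h4 : (Istar \ W).card ≤ k * (Istar \ W).card := Nat.le_mul_of_pos_left _ hk
  have h5 : k * (Istar \ W).card + k * W.card = k * Istar.card := by
    rw [← Nat.mul_add, h3]
  omega

end Count

section Serial

variable {F : Finset α}

lemma dep_insert_restrict {X : Finset V} (ht : HTight edge F X) {c : α}
    (hc : c ∉ F) (hcX : edge c ⊆ X) :
    ¬HFor edge (insert c (_root_.restrict edge F X)) := by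
  intro h
  have hk := h X ht.1
  rw [restrict_insert, if_pos hcX] at hk
  have hcm : c ∉ _root_.restrict edge (_root_.restrict edge F X) X :=
    fun hm => hc (restrict_subset F X (restrict_subset _ X hm))
  rw [Finset.card_insert_of_notMem hcm, restrict_restrict] at hk
  have h2 := ht.2
  omega

lemma exists_last_prop {β : Type*} {R : β → β → Prop} {P : β → Prop} :
    ∀ {l : List β}, l.Pairwise R → ∀ p ∈ l, P p →
      ∃ ps ∈ l, P ps ∧ ∀ q ∈ l, P q → q = ps ∨ R q ps := by
  intro l
  induction l with
  | nil => intro _ p hp; simp at hp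
  | cons a t ih =>
    intro hpw p hp hPp
    rw [List.pairwise_cons] at hpw
    by_cases hex : ∃ p' ∈ t, P p'
    · obtain ⟨p', hp', hPp'⟩ := hex
      obtain ⟨ps, hpsmem, hPps, hlast⟩ := ih hpw.2 p' hp' hPp'
      refine ⟨ps, List.mem_cons_of_mem a hpsmem, hPps, ?_⟩
      intro q hq hPq
      rcases List.mem_cons.1 hq with rfl | hq'
      · exact Or.inr (hpw.1 ps hpsmem)
      · exact hlast q hq' hPq
    · push_neg at hex
      have hpa : p = a := by
        rcases List.mem_cons.1 hp with rfl | hp'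
        · rfl
        · exact absurd hPp (hex p hp')
      refine ⟨a, List.mem_cons_self, hpa ▸ hPp, ?_⟩
      intro q hq hPq
      rcases List.mem_cons.1 hq with rfl | hq'
      · exact Or.inl rfl
      · exact absurd hPq (hex q hq')

lemma serial_core (hF : HFor edge F) (hFne : ∀ a ∈ F, (edge a).Nonempty)
    {L : List (α × α)}
    (hLne : ∀ p ∈ L, (edge p.1).Nonempty)
    (hpair : ∀ p ∈ L, p.1 ∉ F ∧ ¬HFor edge (insert p.1 F) ∧
      p.2 ∈ _root_.restrict edge F (minTight edge F p.1))
    (hstair : L.Pairwise (fun p q => ¬ edge q.2 ⊆ minTight edge F p.1)) :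
    HFor edge ((F \ (L.map Prod.snd).toFinset) ∪ (L.map Prod.fst).toFinset) := by
  classical
  by_contra hdep
  set Bf := (L.map Prod.snd).toFinset with hBf
  set Yf := (L.map Prod.fst).toFinset with hYf
  set J := (F \ Bf) ∪ Yf with hJdef
  have hmemY : ∀ {c : α}, c ∈ Yf ↔ ∃ q ∈ L, q.1 = c := by
    intro c
    rw [hYf, List.mem_toFinset, List.mem_map]
  have hmemB : ∀ {c : α}, c ∈ Bf ↔ ∃ q ∈ L, q.2 = c := by
    intro c
    rw [hBf, List.mem_toFinset, List.mem_map]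
  have hYnF : ∀ {c : α}, c ∈ Yf → c ∉ F := by
    intro c hc
    obtain ⟨q, hq, rfl⟩ := hmemY.1 hc
    exact (hpair q hq).1
  -- minimal dependent subset of J
  have hne : (J.powerset.filter (fun D => ¬HFor edge D)).Nonempty :=
    ⟨J, Finset.mem_filter.2 ⟨Finset.mem_powerset.2 subset_rfl, hdep⟩⟩
  obtain ⟨C, hC, hCmin⟩ : ∃ C ∈ _, ∀ x' ∈ _, ¬ x' < C := by
    obtain ⟨C, hC⟩ := Finset.exists_minimal hne
    exact ⟨C, hC.1, fun x' hx' hlt => lt_irrefl _ (lt_of_lt_of_le hlt (hC.2 hx' hlt.le))⟩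
  rw [Finset.mem_filter, Finset.mem_powerset] at hC
  obtain ⟨hCJ, hCdep⟩ := hC
  have hCmin' : ∀ D, D ⊂ C → HFor edge D := by
    intro D hD
    by_contra hDdep
    exact hCmin D (Finset.mem_filter.2
      ⟨Finset.mem_powerset.2 (hD.subset.trans hCJ), hDdep⟩) hD
  have hex : ∃ p ∈ L, p.1 ∈ C := by
    by_contra h
    push_neg at h
    apply hCdep
    apply hF.mono
    intro c hc
    rcases Finset.mem_union.1 (hCJ hc) with h1 | h1
    · exact (Finset.mem_sdiff.1 h1).1
    · obtain ⟨q, hq, rfl⟩ := hmemY.1 h1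
      exact absurd hc (h q hq)
  obtain ⟨p', hp'⟩ := hex
  obtain ⟨ps, hpsL, hpsC, hlast⟩ :=
    exists_last_prop (P := fun p : α × α => p.1 ∈ C) hstair p' hp'.1 hp'.2
  obtain ⟨hyF, hydep, hbmem⟩ := hpair ps hpsL
  have hbF : ps.2 ∈ F := restrict_subset _ _ hbmem
  have hbX : edge ps.2 ⊆ minTight edge F ps.1 := (mem_restrict.1 hbmem).2
  have hbBf : ps.2 ∈ Bf := hmemB.2 ⟨ps, hpsL, rfl⟩
  set A1 := F.erase ps.2 with hA1
  set S1 := A1 ∪ C.erase ps.1 with hS1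
  have hA1S : A1 ⊆ S1 := Finset.subset_union_left
  have hA1f : HFor edge A1 := hF.mono (Finset.erase_subset _ _)
  have hCEsub : ∀ {c : α}, c ∈ C.erase ps.1 → (edge c).Nonempty := by
    intro c hc
    have hcC := Finset.mem_of_mem_erase hc
    rcases Finset.mem_union.1 (hCJ hcC) with h1 | h1
    · exact hFne c (Finset.mem_sdiff.1 h1).1
    · obtain ⟨q, hq, rfl⟩ := hmemY.1 h1
      exact hLne q hq
  have hS1ne : ∀ a ∈ S1, (edge a).Nonempty := by
    intro a ha
    rcases Finset.mem_union.1 ha with h1 | h1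
    · exact hFne a (Finset.erase_subset _ _ h1)
    · exact hCEsub h1
  have hspan : ∀ c ∈ S1, c ∉ A1 → ¬HFor edge (insert c A1) := by
    intro c hcS hcA
    have hcC' : c ∈ C.erase ps.1 := by
      rcases Finset.mem_union.1 hcS with h1 | h1
      · exact absurd h1 hcA
      · exact h1
    have hcy : c ≠ ps.1 := Finset.ne_of_mem_erase hcC'
    have hcC : c ∈ C := Finset.mem_of_mem_erase hcC'
    rcases Finset.mem_union.1 (hCJ hcC) with h1 | h1
    · -- c ∈ F \ Bf, so c ≠ ps.2, so c ∈ A1, contradiction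
      exfalso
      apply hcA
      rw [hA1, Finset.mem_erase]
      exact ⟨fun h => (Finset.mem_sdiff.1 h1).2 (h ▸ hbBf), (Finset.mem_sdiff.1 h1).1⟩
    · obtain ⟨q, hq, rfl⟩ := hmemY.1 h1
      obtain ⟨hq1, hq2, hq3⟩ := hpair q hq
      have hqne : q ≠ ps := fun h => hcy (by rw [h])
      have hstairq : ¬ edge ps.2 ⊆ minTight edge F q.1 := by
        rcases hlast q hq hcC with h | h
        · exact absurd h hqne
        · exact h
      have hqt := minTight_spec (edge := edge) hF hq1 (hLne q hq) hq2
      have hdep1 : ¬HFor edge (insert q.1 (_root_.restrict edge F (minTight edge F q.1))) :=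
        dep_insert_restrict hqt.1.2 hq1 hqt.1.1
      refine dep_mono hdep1 (Finset.insert_subset_insert _ ?_)
      intro e he
      rw [hA1, Finset.mem_erase]
      exact ⟨fun h => hstairq (h ▸ (mem_restrict.1 he).2), restrict_subset _ _ he⟩
  have hrk1 : rk edge S1 = A1.card := rk_eq_of_spanning hS1ne hA1S hA1f hspan
  have hCey : HFor edge (C.erase ps.1) := hCmin' _ (Finset.erase_ssubset hpsC)
  have hCeS : C.erase ps.1 ⊆ S1 := Finset.subset_union_right
  have hCdep' : ¬HFor edge (insert ps.1 (C.erase ps.1)) := by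
    rwa [Finset.insert_erase hpsC]
  have hS1ne' : ∀ b ∈ insert ps.1 S1, (edge b).Nonempty := by
    intro b hb
    rcases Finset.mem_insert.1 hb with rfl | h
    · exact hLne ps hpsL
    · exact hS1ne b h
  have hrk2 : rk edge (insert ps.1 S1) = rk edge S1 :=
    rk_insert_dep hS1ne' hCeS hCey hCdep'
  have hyA1 : ps.1 ∉ A1 := fun h => hyF (Finset.erase_subset _ _ h)
  have hFpos : 0 < F.card := Finset.card_pos.2 ⟨ps.2, hbF⟩
  have hfinal : ¬HFor edge (insert ps.1 A1) := by
    intro h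
    have hle := le_rk h (Finset.insert_subset_insert _ hA1S)
    rw [hrk2, hrk1] at hle
    rw [Finset.card_insert_of_notMem hyA1, hA1, Finset.card_erase_of_mem hbF] at hle
    omega
  have hcirc := circuit_subset_dep hF hyF (hLne ps hpsL) hydep
    (D := insert ps.1 A1)
    (Finset.insert_subset_insert _ (Finset.erase_subset _ _)) hfinal
  have hbD : ps.2 ∈ insert ps.1 A1 := hcirc (Finset.mem_insert_of_mem hbmem)
  rcases Finset.mem_insert.1 hbD with h | h
  · exact hyF (h ▸ hbF)
  · exact (Finset.mem_erase.1 h).1 rfl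

lemma serial_ext (hF : HFor edge F) (hFne : ∀ a ∈ F, (edge a).Nonempty)
    {L : List (α × α)}
    (hLne : ∀ p ∈ L, (edge p.1).Nonempty)
    (hpair : ∀ p ∈ L, p.1 ∉ F ∧ ¬HFor edge (insert p.1 F) ∧
      p.2 ∈ _root_.restrict edge F (minTight edge F p.1))
    (hstair : L.Pairwise (fun p q => ¬ edge q.2 ⊆ minTight edge F p.1))
    {y0 : α} (hy0F : y0 ∉ F) (hy0ne : (edge y0).Nonempty)
    (hy0f : HFor edge (insert y0 F)) :
    HFor edge (insert y0 ((F \ (L.map Prod.snd).toFinset) ∪ (L.map Prod.fst).toFinset)) := by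
  classical
  by_contra hdep
  set Bf := (L.map Prod.snd).toFinset with hBf
  set Yf := (L.map Prod.fst).toFinset with hYf
  set J := (F \ Bf) ∪ Yf with hJdef
  have hJfor : HFor edge J := serial_core hF hFne hLne hpair hstair
  have hne : ((insert y0 J).powerset.filter (fun D => ¬HFor edge D)).Nonempty :=
    ⟨insert y0 J, Finset.mem_filter.2 ⟨Finset.mem_powerset.2 subset_rfl, hdep⟩⟩
  obtain ⟨C, hC, hCmin⟩ : ∃ C ∈ _, ∀ x' ∈ _, ¬ x' < C := by
    obtain ⟨C, hC⟩ := Finset.exists_minimal hne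
    exact ⟨C, hC.1, fun x' hx' hlt => lt_irrefl _ (lt_of_lt_of_le hlt (hC.2 hx' hlt.le))⟩
  rw [Finset.mem_filter, Finset.mem_powerset] at hC
  obtain ⟨hCJ, hCdep⟩ := hC
  have hCmin' : ∀ D, D ⊂ C → HFor edge D := by
    intro D hD
    by_contra hDdep
    exact hCmin D (Finset.mem_filter.2
      ⟨Finset.mem_powerset.2 (hD.subset.trans hCJ), hDdep⟩) hD
  have hy0C : y0 ∈ C := by
    by_contra h
    apply hCdep
    apply hJfor.mono
    intro c hc
    rcases Finset.mem_insert.1 (hCJ hc) with rfl | h1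
    · exact absurd hc h
    · exact h1
  have hCsub : C.erase y0 ⊆ J := by
    intro c hc
    rcases Finset.mem_insert.1 (hCJ (Finset.mem_of_mem_erase hc)) with h1 | h1
    · exact absurd h1 (Finset.ne_of_mem_erase hc)
    · exact h1
  set S1 := F ∪ C.erase y0 with hS1
  have hS1ne : ∀ a ∈ S1, (edge a).Nonempty := by
    intro a ha
    rcases Finset.mem_union.1 ha with h1 | h1
    · exact hFne a h1
    · rcases Finset.mem_union.1 (hCsub h1) with h2 | h2
      · exact hFne a (Finset.mem_sdiff.1 h2).1
      · obtain ⟨q, hq, rfl⟩ := by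
          rw [hYf, List.mem_toFinset, List.mem_map] at h2
          exact h2
        exact hLne q hq
  have hspan : ∀ c ∈ S1, c ∉ F → ¬HFor edge (insert c F) := by
    intro c hcS hcF
    have hcC : c ∈ C.erase y0 := by
      rcases Finset.mem_union.1 hcS with h1 | h1
      · exact absurd h1 hcF
      · exact h1
    rcases Finset.mem_union.1 (hCsub hcC) with h1 | h1
    · exact absurd (Finset.mem_sdiff.1 h1).1 hcF
    · obtain ⟨q, hq, hq1⟩ : ∃ q ∈ L, q.1 = c := by
        rw [hYf, List.mem_toFinset, List.mem_map] at h1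
        obtain ⟨q, hqL, rfl⟩ := h1
        exact ⟨q, hqL, rfl⟩
      subst hq1
      obtain ⟨hq1, hq2, _⟩ := hpair q hq
      have hqt := minTight_spec (edge := edge) hF hq1 (hLne q hq) hq2
      have hdep1 : ¬HFor edge (insert q.1 (_root_.restrict edge F (minTight edge F q.1))) :=
        dep_insert_restrict hqt.1.2 hq1 hqt.1.1
      exact dep_mono hdep1 (Finset.insert_subset_insert _ (restrict_subset _ _))
  have hrk1 : rk edge S1 = F.card :=
    rk_eq_of_spanning hS1ne Finset.subset_union_left hF hspan
  have hCey : HFor edge (C.erase y0) := hCmin' _ (Finset.erase_ssubset hy0C)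
  have hCdep' : ¬HFor edge (insert y0 (C.erase y0)) := by
    rwa [Finset.insert_erase hy0C]
  have hS1ne' : ∀ b ∈ insert y0 S1, (edge b).Nonempty := by
    intro b hb
    rcases Finset.mem_insert.1 hb with rfl | h
    · exact hy0ne
    · exact hS1ne b h
  have hrk2 : rk edge (insert y0 S1) = rk edge S1 :=
    rk_insert_dep hS1ne' Finset.subset_union_right hCey hCdep'
  have hle := le_rk hy0f (Finset.insert_subset_insert _ (Finset.subset_union_left (s₂ := C.erase y0)))
  rw [hrk2, hrk1, Finset.card_insert_of_notMem hy0F] at hle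
  omega
end Serial

section Aug

variable {k : ℕ}

/-- `good m a`: from `a` one can reach, in `m` exchange steps, an element that can be
added to one of the forests. -/
def good (edge : α → Finset V) (I : Fin k → Finset α) : ℕ → α → Prop
  | 0, a => ∃ i, a ∉ I i ∧ HFor edge (insert a (I i))
  | (m+1), a => ∃ i, a ∉ I i ∧ ¬HFor edge (insert a (I i)) ∧
      ∃ b ∈ _root_.restrict edge (I i) (minTight edge (I i) a), good edge I m b

def Qp (edge : α → Finset V) (I : Fin k → Finset α) (a : α) : Prop :=
  ∃ m, good edge I m a

noncomputable def md (edge : α → Finset V) (I : Fin k → Finset α) (a : α) : ℕ :=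
  if h : Qp edge I a then Nat.find h else 0

variable {I : Fin k → Finset α}

lemma good_md {a : α} (h : Qp edge I a) : good edge I (md edge I a) a := by
  rw [md, dif_pos h]
  exact Nat.find_spec h

lemma md_le {a : α} {m : ℕ} (h : good edge I m a) : md edge I a ≤ m := by
  rw [md, dif_pos ⟨m, h⟩]
  exact Nat.find_min' _ h

lemma good_succ {a b : α} {i : Fin k} {m : ℕ} (ha : a ∉ I i)
    (hdep : ¬HFor edge (insert a (I i)))
    (hb : b ∈ _root_.restrict edge (I i) (minTight edge (I i) a))
    (h : good edge I m b) : good edge I (m+1) a :=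
  ⟨i, ha, hdep, b, hb, h⟩

lemma md_arc {a b : α} {i : Fin k} (ha : a ∉ I i)
    (hdep : ¬HFor edge (insert a (I i)))
    (hb : b ∈ _root_.restrict edge (I i) (minTight edge (I i) a))
    (hQb : Qp edge I b) : md edge I a ≤ md edge I b + 1 :=
  md_le (good_succ ha hdep hb (good_md hQb))

/-- collected removed elements. -/
def Bofa (acc : Fin k → List (α × α)) : Finset α :=
  Finset.univ.biUnion (fun i => ((acc i).map Prod.snd).toFinset)

/-- collected added elements. -/
def Yofa (acc : Fin k → List (α × α)) : Finset α :=
  Finset.univ.biUnion (fun i => ((acc i).map Prod.fst).toFinset)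

/-- invariants of the augmenting-path recursion. -/
def Inv (edge : α → Finset V) (E : Finset α) (I : Fin k → Finset α)
    (x : α) (acc : Fin k → List (α × α)) : Prop :=
  (∀ i, ∀ p ∈ acc i,
     p.1 ∉ I i ∧ ¬HFor edge (insert p.1 (I i)) ∧
     p.2 ∈ _root_.restrict edge (I i) (minTight edge (I i) p.1) ∧
     p.1 ∈ E ∧
     Qp edge I p.1 ∧ Qp edge I p.2 ∧ md edge I p.2 + 1 = md edge I p.1) ∧
  (∀ i, ∀ p ∈ acc i, md edge I x + 1 ≤ md edge I p.1 ∧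
     (x ∉ I i → md edge I x + 2 ≤ md edge I p.1)) ∧
  (∀ i, (acc i).Pairwise (fun p q => md edge I p.1 + 2 ≤ md edge I q.1)) ∧
  (∀ i j, i ≠ j → ∀ p ∈ acc i, ∀ q ∈ acc j, md edge I p.1 ≠ md edge I q.1) ∧
  (∀ i, x ∈ I i → ∃ p ∈ acc i, p.2 = x) ∧
  (∀ i, ∀ p ∈ acc i, ∀ j, p.1 ∈ I j → ∃ q ∈ acc j, q.2 = p.1)

end Aug

section Rec

variable {k : ℕ} {E : Finset α} {I : Fin k → Finset α}

lemma rec_aux (hfor : ∀ i, HFor edge (I i)) (hIE : ∀ i, I i ⊆ E)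
    (hdisj : ∀ i j, i ≠ j → Disjoint (I i) (I j))
    (hEne : ∀ e ∈ E, (edge e).Nonempty) :
    ∀ (m : ℕ) (x : α) (acc : Fin k → List (α × α)), x ∈ E → Qp edge I x →
      md edge I x = m → Inv edge E I x acc →
      ∃ I' : Fin k → Finset α, (∀ i, HFor edge (I' i)) ∧ (∀ i, I' i ⊆ E) ∧
        (∀ i j, i ≠ j → Disjoint (I' i) (I' j)) ∧
        Finset.univ.biUnion I' =
          ((Finset.univ.biUnion I \ Bofa acc) ∪ Yofa acc) ∪ {x} := by
  classical
  intro m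
  induction m with
  | zero =>
    intro x acc hxE hQx hmd hinv
    obtain ⟨hinv1, hinv3, hinv4, hinv5, hinv6a, hinv6b⟩ := hinv
    have hg0 : good edge I 0 x := hmd ▸ good_md hQx
    obtain ⟨j, hxj, hxf⟩ := hg0
    set Bi : Fin k → Finset α := fun i => ((acc i).map Prod.snd).toFinset with hBi
    set Yi : Fin k → Finset α := fun i => ((acc i).map Prod.fst).toFinset with hYi
    have hmemBi : ∀ {i : Fin k} {c : α}, c ∈ Bi i ↔ ∃ p ∈ acc i, p.2 = c := by
      intro i c
      rw [hBi]
      simp only [List.mem_toFinset, List.mem_map]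
    have hmemYi : ∀ {i : Fin k} {c : α}, c ∈ Yi i ↔ ∃ p ∈ acc i, p.1 = c := by
      intro i c
      rw [hYi]
      simp only [List.mem_toFinset, List.mem_map]
    set I' : Fin k → Finset α :=
      fun i => if i = j then insert x ((I i \ Bi i) ∪ Yi i) else (I i \ Bi i) ∪ Yi i
      with hI'
    have hI'j : I' j = insert x ((I j \ Bi j) ∪ Yi j) := by rw [hI']; simp
    have hI'ne : ∀ i, i ≠ j → I' i = (I i \ Bi i) ∪ Yi i := by
      intro i hij; rw [hI']; simp [hij]
    -- per-index serial hypotheses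
    have hserial : ∀ i, HFor edge ((I i \ Bi i) ∪ Yi i) ∧
        (i = j → HFor edge (insert x ((I i \ Bi i) ∪ Yi i))) := by
      intro i
      have hFne : ∀ a ∈ I i, (edge a).Nonempty := fun a ha => hEne a (hIE i ha)
      have hstair0 : (acc i).Pairwise
          (fun p q => ¬ edge p.2 ⊆ minTight edge (I i) q.1) := by
        refine (hinv4 i).imp_of_mem ?_
        intro p q hp hq hR hsub
        obtain ⟨hq1, hq2, hq3, hq4, hq5, hq6, hq7⟩ := hinv1 i q hq
        obtain ⟨hp1, hp2, hp3, hp4, hp5, hp6, hp7⟩ := hinv1 i p hp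
        have hpI : p.2 ∈ I i := restrict_subset _ _ hp3
        have harc : md edge I q.1 ≤ md edge I p.2 + 1 :=
          md_arc hq1 hq2 (mem_restrict.2 ⟨hpI, hsub⟩) hp6
        omega
      have hLpair : ∀ p ∈ (acc i).reverse, p.1 ∉ I i ∧ ¬HFor edge (insert p.1 (I i)) ∧
          p.2 ∈ _root_.restrict edge (I i) (minTight edge (I i) p.1) := by
        intro p hp
        rw [List.mem_reverse] at hp
        obtain ⟨h1, h2, h3, _⟩ := hinv1 i p hp
        exact ⟨h1, h2, h3⟩
      have hLne : ∀ p ∈ (acc i).reverse, (edge p.1).Nonempty := by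
        intro p hp
        rw [List.mem_reverse] at hp
        exact hEne p.1 (hinv1 i p hp).2.2.2.1
      have hLstair : ((acc i).reverse).Pairwise
          (fun p q => ¬ edge q.2 ⊆ minTight edge (I i) p.1) :=
        List.pairwise_reverse.2 hstair0
      have hBeq : (((acc i).reverse.map Prod.snd)).toFinset = Bi i := by
        rw [List.map_reverse, List.toFinset_reverse, hBi]
      have hYeq : (((acc i).reverse.map Prod.fst)).toFinset = Yi i := by
        rw [List.map_reverse, List.toFinset_reverse, hYi]
      constructor
      · have := serial_core (hfor i) hFne hLne hLpair hLstair
        rwa [hBeq, hYeq] at this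
      · rintro rfl
        have := serial_ext (hfor i) hFne hLne hLpair hLstair hxj
          (hEne x hxE) hxf
        rwa [hBeq, hYeq] at this
    have hsub1 : ∀ i, (I i \ Bi i) ∪ Yi i ⊆ I' i := by
      intro i
      by_cases hij : i = j
      · subst hij; rw [hI'j]; exact Finset.subset_insert _ _
      · rw [hI'ne i hij]
    have hmem' : ∀ i₀ c₀, c₀ ∈ I' i₀ → (i₀ = j ∧ c₀ = x) ∨ (∃ p ∈ acc i₀, p.1 = c₀) ∨
        (c₀ ∈ I i₀ ∧ c₀ ∉ Bi i₀) := by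
      intro i₀ c₀ hc₀
      have hsplit : c₀ ∈ (I i₀ \ Bi i₀) ∪ Yi i₀ → (∃ p ∈ acc i₀, p.1 = c₀) ∨
          (c₀ ∈ I i₀ ∧ c₀ ∉ Bi i₀) := by
        intro h1
        rcases Finset.mem_union.1 h1 with h2 | h2
        · exact Or.inr ⟨(Finset.mem_sdiff.1 h2).1, (Finset.mem_sdiff.1 h2).2⟩
        · exact Or.inl (hmemYi.1 h2)
      by_cases hij : i₀ = j
      · subst hij
        rw [hI'j] at hc₀
        rcases Finset.mem_insert.1 hc₀ with rfl | h1
        · exact Or.inl ⟨rfl, rfl⟩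
        · exact Or.inr (hsplit h1)
      · rw [hI'ne i₀ hij] at hc₀
        exact Or.inr (hsplit hc₀)
    have hBtoI : ∀ {i₀ : Fin k} {c₀ : α}, c₀ ∈ Bi i₀ → c₀ ∈ I i₀ := by
      intro i₀ c₀ h
      obtain ⟨p, hp, hpc⟩ := hmemBi.1 h
      exact hpc ▸ restrict_subset _ _ (hinv1 i₀ p hp).2.2.1
    refine ⟨I', ?_, ?_, ?_, ?_⟩
    · intro i
      by_cases hij : i = j
      · subst hij; rw [hI'j]; exact (hserial i).2 rfl
      · rw [hI'ne i hij]; exact (hserial i).1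
    · intro i
      have hsub : (I i \ Bi i) ∪ Yi i ⊆ E := by
        intro c hc
        rcases Finset.mem_union.1 hc with h1 | h1
        · exact hIE i (Finset.mem_sdiff.1 h1).1
        · obtain ⟨p, hp, hpc⟩ := hmemYi.1 h1
          exact hpc ▸ (hinv1 i p hp).2.2.2.1
      by_cases hij : i = j
      · subst hij; rw [hI'j]; exact Finset.insert_subset hxE hsub
      · rw [hI'ne i hij]; exact hsub
    · intro i i' hii'
      rw [Finset.disjoint_left]
      intro c hci hci'
      rcases hmem' i c hci with ⟨hij, hcx⟩ | ⟨p, hp, hpc⟩ | ⟨h1, h2⟩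
      · rcases hmem' i' c hci' with ⟨hij', hcx'⟩ | ⟨q, hq, hqc⟩ | ⟨h1', h2'⟩
        · exact hii' (hij.trans hij'.symm)
        · have h3 := (hinv3 i' q hq).1
          have h4 : md edge I q.1 = 0 := by rw [hqc, hcx, hmd]
          rw [hmd] at h3
          omega
        · obtain ⟨p, hp, hp2⟩ := hinv6a i' (hcx ▸ h1')
          exact h2' (hcx ▸ (hmemBi.2 ⟨p, hp, hp2⟩))
      · rcases hmem' i' c hci' with ⟨hij', hcx'⟩ | ⟨q, hq, hqc⟩ | ⟨h1', h2'⟩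
        · have h3 := (hinv3 i p hp).1
          have h4 : md edge I p.1 = 0 := by rw [hpc, hcx', hmd]
          rw [hmd] at h3
          omega
        · have h5 := hinv5 i i' hii' p hp q hq
          rw [hpc, hqc] at h5
          exact h5 rfl
        · obtain ⟨q, hq, hq2⟩ := hinv6b i p hp i' (hpc ▸ h1')
          exact h2' (hmemBi.2 ⟨q, hq, hq2.trans hpc⟩)
      · rcases hmem' i' c hci' with ⟨hij', hcx'⟩ | ⟨q, hq, hqc⟩ | ⟨h1', h2'⟩
        · obtain ⟨p, hp, hp2⟩ := hinv6a i (hcx' ▸ h1)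
          exact h2 (hcx' ▸ (hmemBi.2 ⟨p, hp, hp2⟩))
        · obtain ⟨q2, hq2, hq22⟩ := hinv6b i' q hq i (hqc ▸ h1)
          exact h2 (hmemBi.2 ⟨q2, hq2, hq22.trans hqc⟩)
        · exact Finset.disjoint_left.1 (hdisj i i' hii') h1 h1'
    · ext c
      constructor
      · intro hc
        obtain ⟨i, _, hci⟩ := Finset.mem_biUnion.1 hc
        rcases hmem' i c hci with ⟨hij, hcx⟩ | ⟨p, hp, hpc⟩ | ⟨h1, h2⟩
        · exact Finset.mem_union.2 (Or.inr (Finset.mem_singleton.2 hcx))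
        · refine Finset.mem_union.2 (Or.inl (Finset.mem_union.2 (Or.inr ?_)))
          exact Finset.mem_biUnion.2 ⟨i, Finset.mem_univ i,
            (by rw [List.mem_toFinset, List.mem_map]; exact ⟨p, hp, hpc⟩)⟩
        · refine Finset.mem_union.2 (Or.inl (Finset.mem_union.2 (Or.inl ?_)))
          rw [Finset.mem_sdiff]
          refine ⟨Finset.mem_biUnion.2 ⟨i, Finset.mem_univ i, h1⟩, ?_⟩
          intro hB
          obtain ⟨i2, _, hc2⟩ := Finset.mem_biUnion.1 hB
          have hc3 : c ∈ Bi i2 := hc2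
          have hcI2 : c ∈ I i2 := hBtoI hc3
          by_cases hei : i2 = i
          · exact h2 (hei ▸ hc3)
          · exact Finset.disjoint_left.1 (hdisj i2 i hei) hcI2 h1
      · intro hc
        rcases Finset.mem_union.1 hc with h1 | h1
        · rcases Finset.mem_union.1 h1 with h2 | h2
          · obtain ⟨h3, h4⟩ := Finset.mem_sdiff.1 h2
            obtain ⟨i, _, hci⟩ := Finset.mem_biUnion.1 h3
            have hcB : c ∉ Bi i := by
              intro h
              exact h4 (Finset.mem_biUnion.2 ⟨i, Finset.mem_univ i, h⟩)
            refine Finset.mem_biUnion.2 ⟨i, Finset.mem_univ i, hsub1 i ?_⟩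
            exact Finset.mem_union.2 (Or.inl (Finset.mem_sdiff.2 ⟨hci, hcB⟩))
          · obtain ⟨i, _, hci⟩ := Finset.mem_biUnion.1 h2
            refine Finset.mem_biUnion.2 ⟨i, Finset.mem_univ i, hsub1 i ?_⟩
            exact Finset.mem_union.2 (Or.inr hci)
        · rw [Finset.mem_singleton] at h1
          subst h1
          exact Finset.mem_biUnion.2 ⟨j, Finset.mem_univ j, by
            rw [hI'j]; exact Finset.mem_insert_self _ _⟩
  | succ m ih =>
    intro x acc hxE hQx hmd hinv
    obtain ⟨hinv1, hinv3, hinv4, hinv5, hinv6a, hinv6b⟩ := hinv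
    have hgs : good edge I (m+1) x := hmd ▸ good_md hQx
    obtain ⟨i, hxi, hxdep, b, hb, hgb⟩ := hgs
    have hbI : b ∈ I i := restrict_subset _ _ hb
    have hbE : b ∈ E := hIE i hbI
    have hQb : Qp edge I b := ⟨m, hgb⟩
    have hmdb : md edge I b = m := by
      have h1 := md_le hgb
      have h2 : md edge I x ≤ md edge I b + 1 := md_arc hxi hxdep hb hQb
      omega
    obtain ⟨acc', hacc'i, hacc'ne⟩ :
        ∃ acc' : Fin k → List (α × α), acc' i = (x, b) :: acc i ∧
          ∀ i', i' ≠ i → acc' i' = acc i' :=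
      ⟨Function.update acc i ((x, b) :: acc i), Function.update_self _ _ _,
        fun i' h => Function.update_of_ne h _ _⟩
    have hmem_acc' : ∀ i' p, p ∈ acc' i' ↔ (i' = i ∧ p = (x, b)) ∨ p ∈ acc i' := by
      intro i' p
      by_cases h : i' = i
      · subst h
        rw [hacc'i, List.mem_cons]
        constructor
        · rintro (rfl | h)
          · exact Or.inl ⟨rfl, rfl⟩
          · exact Or.inr h
        · rintro (⟨-, rfl⟩ | h)
          · exact Or.inl rfl
          · exact Or.inr h
      · rw [hacc'ne i' h]
        constructor
        · exact Or.inr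
        · rintro (⟨rfl, -⟩ | hh)
          · exact absurd rfl h
          · exact hh
    have hinvnew : Inv edge E I b acc' := by
      refine ⟨?_, ?_, ?_, ?_, ?_, ?_⟩
      · intro i' p hp
        rcases (hmem_acc' i' p).1 hp with ⟨rfl, rfl⟩ | hp'
        · exact ⟨hxi, hxdep, hb, hxE, hQx, hQb, by rw [hmdb, hmd]⟩
        · exact hinv1 i' p hp'
      · intro i' p hp
        rcases (hmem_acc' i' p).1 hp with ⟨rfl, rfl⟩ | hp'
        · constructor
          · rw [hmdb, hmd]
          · intro hbni
            exact absurd hbI hbni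
        · have h3 := (hinv3 i' p hp').1
          rw [hmd] at h3
          rw [hmdb]
          exact ⟨by omega, fun _ => by omega⟩
      · intro i'
        by_cases h : i' = i
        · subst h
          rw [hacc'i, List.pairwise_cons]
          constructor
          · intro q hq
            have h3 := (hinv3 i' q hq).2 hxi
            rw [hmd] at h3
            show md edge I x + 2 ≤ md edge I q.1
            rw [hmd]
            exact h3
          · exact hinv4 i'
        · rw [hacc'ne i' h]
          exact hinv4 i'
      · intro i1 i2 h12 p hp q hq
        rcases (hmem_acc' i1 p).1 hp with ⟨rfl, rfl⟩ | hp'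
        · rcases (hmem_acc' i2 q).1 hq with ⟨rfl, rfl⟩ | hq'
          · exact absurd rfl h12
          · have h3 := (hinv3 i2 q hq').1
            rw [hmd] at h3
            intro hcontra
            rw [hmd] at hcontra
            omega
        · rcases (hmem_acc' i2 q).1 hq with ⟨rfl, rfl⟩ | hq'
          · have h3 := (hinv3 i1 p hp').1
            rw [hmd] at h3
            intro hcontra
            rw [hmd] at hcontra
            omega
          · exact hinv5 i1 i2 h12 p hp' q hq'
      · intro i' hbi'
        have hii : i' = i := by
          by_contra h
          exact Finset.disjoint_left.1 (hdisj i' i h) hbi' hbI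
        subst hii
        exact ⟨(x, b), (hmem_acc' i' (x, b)).2 (Or.inl ⟨rfl, rfl⟩), rfl⟩
      · intro i' p hp j' hpj'
        rcases (hmem_acc' i' p).1 hp with ⟨rfl, rfl⟩ | hp'
        · obtain ⟨q, hq, hq2⟩ := hinv6a j' hpj'
          exact ⟨q, (hmem_acc' j' q).2 (Or.inr hq), hq2⟩
        · obtain ⟨q, hq, hq2⟩ := hinv6b i' p hp' j' hpj'
          exact ⟨q, (hmem_acc' j' q).2 (Or.inr hq), hq2⟩
    obtain ⟨I', hI'for, hI'E, hI'disj, hI'un⟩ := ih b acc' hbE hQb hmdb hinvnew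
    refine ⟨I', hI'for, hI'E, hI'disj, ?_⟩
    rw [hI'un]
    have hBofa' : Bofa acc' = insert b (Bofa acc) := by
      ext c
      rw [Finset.mem_insert]
      constructor
      · intro h
        obtain ⟨i', _, hc'⟩ := Finset.mem_biUnion.1 h
        rw [List.mem_toFinset, List.mem_map] at hc'
        obtain ⟨q, hq, hqc⟩ := hc'
        rcases (hmem_acc' i' q).1 hq with ⟨rfl, rfl⟩ | hq'
        · exact Or.inl hqc.symm
        · exact Or.inr (Finset.mem_biUnion.2 ⟨i', Finset.mem_univ _,
            by rw [List.mem_toFinset, List.mem_map]; exact ⟨q, hq', hqc⟩⟩)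
      · rintro (rfl | h)
        · exact Finset.mem_biUnion.2 ⟨i, Finset.mem_univ _,
            by rw [List.mem_toFinset, List.mem_map]
               exact ⟨(x, c), (hmem_acc' i (x, c)).2 (Or.inl ⟨rfl, rfl⟩), rfl⟩⟩
        · obtain ⟨i', _, hc'⟩ := Finset.mem_biUnion.1 h
          rw [List.mem_toFinset, List.mem_map] at hc'
          obtain ⟨q, hq, hqc⟩ := hc'
          exact Finset.mem_biUnion.2 ⟨i', Finset.mem_univ _,
            by rw [List.mem_toFinset, List.mem_map]
               exact ⟨q, (hmem_acc' i' q).2 (Or.inr hq), hqc⟩⟩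
    have hYofa' : Yofa acc' = insert x (Yofa acc) := by
      ext c
      rw [Finset.mem_insert]
      constructor
      · intro h
        obtain ⟨i', _, hc'⟩ := Finset.mem_biUnion.1 h
        rw [List.mem_toFinset, List.mem_map] at hc'
        obtain ⟨q, hq, hqc⟩ := hc'
        rcases (hmem_acc' i' q).1 hq with ⟨rfl, rfl⟩ | hq'
        · exact Or.inl hqc.symm
        · exact Or.inr (Finset.mem_biUnion.2 ⟨i', Finset.mem_univ _,
            by rw [List.mem_toFinset, List.mem_map]; exact ⟨q, hq', hqc⟩⟩)
      · rintro (rfl | h)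
        · exact Finset.mem_biUnion.2 ⟨i, Finset.mem_univ _,
            by rw [List.mem_toFinset, List.mem_map]
               exact ⟨(c, b), (hmem_acc' i (c, b)).2 (Or.inl ⟨rfl, rfl⟩), rfl⟩⟩
        · obtain ⟨i', _, hc'⟩ := Finset.mem_biUnion.1 h
          rw [List.mem_toFinset, List.mem_map] at hc'
          obtain ⟨q, hq, hqc⟩ := hc'
          exact Finset.mem_biUnion.2 ⟨i', Finset.mem_univ _,
            by rw [List.mem_toFinset, List.mem_map]
               exact ⟨q, (hmem_acc' i' q).2 (Or.inr hq), hqc⟩⟩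
    have hbU : b ∈ Finset.univ.biUnion I := Finset.mem_biUnion.2 ⟨i, Finset.mem_univ _, hbI⟩
    have hbB : b ∉ Bofa acc := by
      intro hbB
      obtain ⟨i2, _, hc2⟩ := Finset.mem_biUnion.1 hbB
      rw [List.mem_toFinset, List.mem_map] at hc2
      obtain ⟨q, hq, hq2⟩ := hc2
      have h7 := (hinv1 i2 q hq).2.2.2.2.2.2
      have h3 := (hinv3 i2 q hq).1
      rw [hq2, hmdb] at h7
      rw [hmd] at h3
      omega
    have hxb : x ≠ b := by
      intro h
      rw [h, hmdb] at hmd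
      omega
    rw [hBofa', hYofa']
    ext c
    simp only [Finset.mem_union, Finset.mem_sdiff, Finset.mem_singleton, Finset.mem_insert]
    constructor
    · rintro ((⟨hcU, hcnB⟩ | (rfl | hcY)) | rfl)
      · exact Or.inl (Or.inl ⟨hcU, fun h => hcnB (Or.inr h)⟩)
      · exact Or.inr rfl
      · exact Or.inl (Or.inr hcY)
      · exact Or.inl (Or.inl ⟨hbU, hbB⟩)
    · rintro ((⟨hcU, hcnB⟩ | hcY) | rfl)
      · by_cases hcb : c = b
        · exact Or.inr hcb
        · refine Or.inl (Or.inl ⟨hcU, ?_⟩)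
          rintro (rfl | h)
          · exact hcb rfl
          · exact hcnB h
      · exact Or.inl (Or.inr (Or.inr hcY))
      · exact Or.inl (Or.inr (Or.inl rfl))


end Rec

section Blocked

variable {k : ℕ} {E : Finset α} {I : Fin k → Finset α}

lemma blocked (hk : 0 < k)
    (hfor : ∀ i, HFor edge (I i)) (hIE : ∀ i, I i ⊆ E)
    (hdisj : ∀ i j, i ≠ j → Disjoint (I i) (I j))
    (hEne : ∀ e ∈ E, (edge e).Nonempty)
    (hcond : ∀ X : Finset V, X.Nonempty → (_root_.restrict edge E X).card ≤ k * (X.card - 1))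
    {x : α} (hxE : x ∈ E) (hxI : ∀ i, x ∉ I i) (hnQ : ¬ Qp edge I x) : False := by
  classical
  set closed : Finset α → Prop := fun S => x ∈ S ∧ ∀ a ∈ S, ∀ i, a ∉ I i →
    ¬HFor edge (insert a (I i)) →
      _root_.restrict edge (I i) (minTight edge (I i) a) ⊆ S with hclosed
  set A : Finset α := E.filter (fun a => ∀ S ∈ E.powerset.filter closed, a ∈ S) with hA
  have hAmem : ∀ {a : α}, a ∈ A ↔ a ∈ E ∧ ∀ S, S ⊆ E → closed S → a ∈ S := by
    intro a
    rw [hA, Finset.mem_filter]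
    constructor
    · rintro ⟨h1, h2⟩
      exact ⟨h1, fun S hSE hSc => h2 S (Finset.mem_filter.2
        ⟨Finset.mem_powerset.2 hSE, hSc⟩)⟩
    · rintro ⟨h1, h2⟩
      exact ⟨h1, fun S hS => h2 S (Finset.mem_powerset.1 (Finset.mem_filter.1 hS).1)
        (Finset.mem_filter.1 hS).2⟩
  have hAE : A ⊆ E := Finset.filter_subset _ _
  have hxA : x ∈ A := hAmem.2 ⟨hxE, fun S _ hS => hS.1⟩
  have hAclosed : closed A := by
    refine ⟨hxA, ?_⟩
    intro a ha i hai hdep c hc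
    refine hAmem.2 ⟨hIE i (restrict_subset _ _ hc), ?_⟩
    intro S hSE hSc
    exact hSc.2 a ((hAmem.1 ha).2 S hSE hSc) i hai hdep hc
  have hnosucc : ∀ a ∈ A, ∀ i, a ∉ I i → ¬HFor edge (insert a (I i)) := by
    intro a ha i hai hf
    apply hnQ
    set T : Finset α := A.filter (fun a => Qp edge I a → Qp edge I x) with hT
    have hTE : T ⊆ E := (Finset.filter_subset _ _).trans hAE
    have hTc : closed T := by
      refine ⟨Finset.mem_filter.2 ⟨hxA, id⟩, ?_⟩
      intro a' ha' i' hai' hdep' c hc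
      have ha'A := (Finset.mem_filter.1 ha').1
      refine Finset.mem_filter.2 ⟨hAclosed.2 a' ha'A i' hai' hdep' hc, ?_⟩
      intro hQc
      exact (Finset.mem_filter.1 ha').2
        ⟨md edge I c + 1, good_succ hai' hdep' hc (good_md hQc)⟩
    have haT : a ∈ T := (hAmem.1 ha).2 T hTE hTc
    exact (Finset.mem_filter.1 haT).2 ⟨0, ⟨i, hai, hf⟩⟩
  obtain ⟨i0, -, hmin⟩ := Finset.exists_min_image (Finset.univ : Finset (Fin k))
    (fun i => (I i ∩ A).card) ⟨⟨0, hk⟩, Finset.mem_univ _⟩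
  set Istar := I i0 ∩ A with hIstar
  have hIstarA : Istar ⊆ A := Finset.inter_subset_right
  have hIstarf : HFor edge Istar := (hfor i0).mono Finset.inter_subset_left
  have hdepA : ∀ a ∈ A, a ∉ Istar → ∃ X, HTight edge Istar X ∧ edge a ⊆ X := by
    intro a ha hanI
    have hai0 : a ∉ I i0 := fun h => hanI (Finset.mem_inter.2 ⟨h, ha⟩)
    have hdep := hnosucc a ha i0 hai0
    have hspec := minTight_spec (edge := edge) (hfor i0) hai0 (hEne a (hAE ha)) hdep
    have hsubA : _root_.restrict edge (I i0) (minTight edge (I i0) a) ⊆ A :=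
      hAclosed.2 a ha i0 hai0 hdep
    have heq : _root_.restrict edge Istar (minTight edge (I i0) a) =
        _root_.restrict edge (I i0) (minTight edge (I i0) a) := by
      apply Finset.Subset.antisymm
      · exact restrict_mono_left Finset.inter_subset_left _
      · intro e he
        exact mem_restrict.2 ⟨Finset.mem_inter.2 ⟨restrict_subset _ _ he, hsubA he⟩,
          (mem_restrict.1 he).2⟩
    refine ⟨minTight edge (I i0) a, ⟨hspec.1.2.1, ?_⟩, hspec.1.1⟩
    rw [heq]
    exact hspec.1.2.2
  have hcount := count_lemma (edge := edge) hk hIstarA hAE hIstarf hEne hcond hdepA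
  set S := Finset.univ.biUnion (fun i => I i ∩ A) with hS
  have hScard : S.card = ∑ i, (I i ∩ A).card := by
    rw [hS]
    exact Finset.card_biUnion (fun i _ j _ hij =>
      (hdisj i j hij).mono Finset.inter_subset_left Finset.inter_subset_left)
  have hSsub : S ⊆ A.erase x := by
    intro c hc
    obtain ⟨i, -, hci⟩ := Finset.mem_biUnion.1 hc
    rw [Finset.mem_erase]
    exact ⟨fun h => hxI i (h ▸ (Finset.mem_inter.1 hci).1), (Finset.mem_inter.1 hci).2⟩
  have h1 : S.card ≤ A.card - 1 := by
    have := Finset.card_le_card hSsub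
    rw [Finset.card_erase_of_mem hxA] at this
    exact this
  have h2 : Finset.univ.card • Istar.card ≤ ∑ i, (I i ∩ A).card :=
    Finset.card_nsmul_le_sum _ _ _ (fun i _ => hmin i (Finset.mem_univ i))
  rw [Finset.card_univ, Fintype.card_fin, smul_eq_mul] at h2
  have hApos : 0 < A.card := Finset.card_pos.2 ⟨x, hxA⟩
  omega

lemma cover {k : ℕ} {E : Finset α} (hk : 0 < k)
    (hEne : ∀ e ∈ E, (edge e).Nonempty)
    (hcond : ∀ X : Finset V, X.Nonempty →
      (_root_.restrict edge E X).card ≤ k * (X.card - 1)) :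
    ∀ (n : ℕ) (I : Fin k → Finset α), (∀ i, HFor edge (I i)) → (∀ i, I i ⊆ E) →
      (∀ i j, i ≠ j → Disjoint (I i) (I j)) → (E \ Finset.univ.biUnion I).card = n →
      ∃ I' : Fin k → Finset α, (∀ i, HFor edge (I' i)) ∧ (∀ i, I' i ⊆ E) ∧
        (∀ i j, i ≠ j → Disjoint (I' i) (I' j)) ∧ Finset.univ.biUnion I' = E := by
  classical
  intro n
  induction n with
  | zero =>
    intro I hfor hIE hdisj hcard
    refine ⟨I, hfor, hIE, hdisj, ?_⟩
    have h1 : E ⊆ Finset.univ.biUnion I :=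
      (Finset.sdiff_eq_empty_iff_subset).1 (Finset.card_eq_zero.1 hcard)
    have h2 : Finset.univ.biUnion I ⊆ E := by
      intro c hc
      obtain ⟨i, -, hci⟩ := Finset.mem_biUnion.1 hc
      exact hIE i hci
    exact Finset.Subset.antisymm h2 h1
  | succ n ih =>
    intro I hfor hIE hdisj hcard
    have hne : (E \ Finset.univ.biUnion I).Nonempty := by
      rw [← Finset.card_pos, hcard]
      omega
    obtain ⟨x, hx⟩ := hne
    have hxE := (Finset.mem_sdiff.1 hx).1
    have hxU := (Finset.mem_sdiff.1 hx).2
    have hxI : ∀ i, x ∉ I i := fun i h =>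
      hxU (Finset.mem_biUnion.2 ⟨i, Finset.mem_univ _, h⟩)
    by_cases hQ : Qp edge I x
    · have hinv : Inv edge E I x (fun _ => []) := by
        refine ⟨?_, ?_, ?_, ?_, ?_, ?_⟩
        · intro i p hp; exact absurd hp List.not_mem_nil
        · intro i p hp; exact absurd hp List.not_mem_nil
        · intro i; exact List.Pairwise.nil
        · intro i j hij p hp; exact absurd hp List.not_mem_nil
        · intro i hxi; exact absurd hxi (hxI i)
        · intro i p hp; exact absurd hp List.not_mem_nil
      obtain ⟨I', h1, h2, h3, h4⟩ := rec_aux hfor hIE hdisj hEne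
        (md edge I x) x (fun _ => []) hxE hQ rfl hinv
      have hBe : Bofa (fun _ : Fin k => ([] : List (α × α))) = ∅ := by
        rw [Bofa]
        ext c
        simp
      have hYe : Yofa (fun _ : Fin k => ([] : List (α × α))) = ∅ := by
        rw [Yofa]
        ext c
        simp
      have hUn : Finset.univ.biUnion I' = Finset.univ.biUnion I ∪ {x} := by
        rw [h4, hBe, hYe]
        simp
      have hcard' : (E \ Finset.univ.biUnion I').card = n := by
        have hset : E \ Finset.univ.biUnion I' = (E \ Finset.univ.biUnion I).erase x := by
          rw [hUn]
          ext c
          simp only [Finset.mem_sdiff, Finset.mem_union, Finset.mem_singleton,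
            Finset.mem_erase]
          constructor
          · rintro ⟨hcE, hc⟩
            exact ⟨fun h => hc (Or.inr h), hcE, fun h => hc (Or.inl h)⟩
          · rintro ⟨h1', h2', h3'⟩
            refine ⟨h2', ?_⟩
            rintro (h | h)
            · exact h3' h
            · exact h1' h
        rw [hset, Finset.card_erase_of_mem hx, hcard]
        omega
      exact ih I' h1 h2 h3 hcard'
    · exact (blocked hk hfor hIE hdisj hEne hcond hxE hxI hQ).elim

end Blocked

end Arb
end ArbAux

/-- `E` can be partitioned into `k` pairwise disjoint hyperforests iff
`|E[X]| ≤ k (|X| - 1)` for every nonempty `X ⊆ V`. -/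
theorem arboricity_characterization [Fintype V] [DecidableEq V] [DecidableEq α]
    (edge : α → Finset V) (E : Finset α)
    (hV : 1 ≤ Fintype.card V) (hE : ∀ e ∈ E, 2 ≤ (edge e).card)
    (k : ℕ) (hk : 0 < k) :
    (∃ F : Fin k → Finset α, (∀ i, IsHyperforest edge E (F i)) ∧
        (∀ i j, i ≠ j → Disjoint (F i) (F j)) ∧
        Finset.univ.biUnion F = E) ↔
      ∀ X : Finset V, X.Nonempty → (restrict edge E X).card ≤ k * (X.card - 1) := by
  classical
  constructor
  · rintro ⟨F, hF, hdisj, hcov⟩ X hX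
    have hres : restrict edge E X = Finset.univ.biUnion (fun i => restrict edge (F i) X) := by
      rw [← hcov]
      ext e
      simp only [Arb.mem_restrict, Finset.mem_biUnion, Finset.mem_univ, true_and]
      tauto
    have hcard : (restrict edge E X).card = ∑ i, (restrict edge (F i) X).card := by
      rw [hres]
      exact Finset.card_biUnion (fun i _ j _ hij =>
        (hdisj i j hij).mono (Arb.restrict_subset _ _) (Arb.restrict_subset _ _))
    rw [hcard]
    calc ∑ i, (restrict edge (F i) X).card ≤ ∑ _i : Fin k, (X.card - 1) :=
          Finset.sum_le_sum (fun i _ => (hF i).2 X hX)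
      _ = k * (X.card - 1) := by
          rw [Finset.sum_const, Finset.card_univ, Fintype.card_fin, smul_eq_mul]
  · intro hcond
    have hEne : ∀ e ∈ E, (edge e).Nonempty := by
      intro e he
      have := hE e he
      rw [← Finset.card_pos]
      omega
    obtain ⟨I', h1, h2, h3, h4⟩ := Arb.cover (edge := edge) hk hEne hcond
      (E \ Finset.univ.biUnion (fun _ : Fin k => (∅ : Finset α))).card
      (fun _ => ∅) (fun _ => Arb.hfor_empty) (fun _ => Finset.empty_subset E)
      (fun _ _ _ => Finset.disjoint_empty_left _) rfl
    refine ⟨I', fun i => ⟨h2 i, ?_⟩, h3, h4⟩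
    intro X hX
    have hfor := h1 i X hX
    have hX1 : 1 ≤ X.card := Finset.card_pos.2 hX
    omega
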